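/- Existence of the doubly-null 4-parallelotope: the four vectors u₁ = (1/2, √3/2, √3/2, √3/2), u₂ = (1/2, √3/2, −√3/2, −√3/2), u₃ = (1/2, −√3/2, √3/2, −√3/2), u₄ = (1/2, −√3/2, −√3/2, √3/2) in ℝ⁴ are linearly independent and satisfy η(uᵢ,uᵢ) = 2 for every i and η(uᵢ,uⱼ) = −1 for all i ≠ j; consequently, for every 3-element subset of {u₁,u₂,u₃,u₄} the sum of its elements is a null vector and its 3×3 Gram matrix with respect to η has determinant zero (every hyperface of the parallelotope spanned by u₁, u₂, u₃, u₄ is a doubly-null parallelepiped). -/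

import Mathlib

/-- The Minkowski bilinear form on `ℝ⁴` with signature `(-,+,+,+)`. -/
def eta (x y : Fin 4 → ℝ) : ℝ :=
  -(x 0 * y 0) + x 1 * y 1 + x 2 * y 2 + x 3 * y 3

/-- The four edge vectors of the doubly-null 4-parallelotope. -/
noncomputable def dnpEdge : Fin 4 → Fin 4 → ℝ :=
  ![![1 / 2, Real.sqrt 3 / 2, Real.sqrt 3 / 2, Real.sqrt 3 / 2],
    ![1 / 2, Real.sqrt 3 / 2, -(Real.sqrt 3 / 2), -(Real.sqrt 3 / 2)],
    ![1 / 2, -(Real.sqrt 3 / 2), Real.sqrt 3 / 2, -(Real.sqrt 3 / 2)],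
    ![1 / 2, -(Real.sqrt 3 / 2), -(Real.sqrt 3 / 2), Real.sqrt 3 / 2]]

lemma dnp_sq3 : Real.sqrt 3 * Real.sqrt 3 = 3 := Real.mul_self_sqrt (by norm_num)

lemma dnp_li : LinearIndependent ℝ dnpEdge := by
  have hM : Matrix.of dnpEdge =
      !![1 / 2, Real.sqrt 3 / 2, Real.sqrt 3 / 2, Real.sqrt 3 / 2;
         1 / 2, Real.sqrt 3 / 2, -(Real.sqrt 3 / 2), -(Real.sqrt 3 / 2);
         1 / 2, -(Real.sqrt 3 / 2), Real.sqrt 3 / 2, -(Real.sqrt 3 / 2);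
         1 / 2, -(Real.sqrt 3 / 2), -(Real.sqrt 3 / 2), Real.sqrt 3 / 2] := by
    ext i j; fin_cases i <;> fin_cases j <;> rfl
  have : LinearIndependent ℝ (fun i => (Matrix.of dnpEdge) i) := by
    change LinearIndependent ℝ (Matrix.of dnpEdge).row
    rw [Matrix.linearIndependent_rows_iff_isUnit, Matrix.isUnit_iff_isUnit_det,
      isUnit_iff_ne_zero, hM]
    have hpos : (0:ℝ) < Real.sqrt 3 := Real.sqrt_pos.2 (by norm_num)
    simp [Matrix.det_succ_row_zero, Matrix.det_fin_three, Fin.sum_univ_succ,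
      Fin.succAbove, Fin.castSucc, Fin.castAdd, Fin.castLE]
    nlinarith [hpos, dnp_sq3]
  exact this

lemma dnp_etaself : ∀ i, eta (dnpEdge i) (dnpEdge i) = 2 := by
  intro i
  fin_cases i <;>
    · show eta ![_,_,_,_] ![_,_,_,_] = 2
      simp [eta]
      nlinarith [dnp_sq3]

lemma dnp_etaoff : ∀ i j, i ≠ j → eta (dnpEdge i) (dnpEdge j) = -1 := by
  intro i j h
  fin_cases i <;> fin_cases j <;>
    first
    | exact absurd rfl h
    | (show eta ![_,_,_,_] ![_,_,_,_] = -1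
       simp [eta]
       nlinarith [dnp_sq3])

lemma eta_expand (a b c : Fin 4 → ℝ) :
    eta (a + b + c) (a + b + c) =
      eta a a + eta b b + eta c c + eta a b + eta b a + eta a c + eta c a
        + eta b c + eta c b := by
  simp only [eta, Pi.add_apply]; ring

/-- Existence of the doubly-null 4-parallelotope: the four explicit vectors
`uᵢ = (1/2, ±√3/2, ±√3/2, ±√3/2)` are linearly independent, have
`η(uᵢ,uᵢ) = 2` and `η(uᵢ,uⱼ) = −1` for `i ≠ j`, and for every 3-element subset
the sum of its elements is null and its Gram matrix is degenerate: every
hyperface of the spanned parallelotope is a doubly-null parallelepiped. -/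
theorem doubly_null_parallelotope_exists :
    LinearIndependent ℝ dnpEdge ∧
    (∀ i, eta (dnpEdge i) (dnpEdge i) = 2) ∧
    (∀ i j, i ≠ j → eta (dnpEdge i) (dnpEdge j) = -1) ∧
    (∀ i j k : Fin 4, i ≠ j → i ≠ k → j ≠ k →
      eta (dnpEdge i + dnpEdge j + dnpEdge k) (dnpEdge i + dnpEdge j + dnpEdge k) = 0 ∧
      (!![eta (dnpEdge i) (dnpEdge i), eta (dnpEdge i) (dnpEdge j), eta (dnpEdge i) (dnpEdge k);
          eta (dnpEdge j) (dnpEdge i), eta (dnpEdge j) (dnpEdge j), eta (dnpEdge j) (dnpEdge k);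
          eta (dnpEdge k) (dnpEdge i), eta (dnpEdge k) (dnpEdge j), eta (dnpEdge k) (dnpEdge k)]).det = 0) := by
  refine ⟨dnp_li, dnp_etaself, dnp_etaoff, ?_⟩
  intro i j k hij hik hjk
  have h1 := dnp_etaself i
  have h2 := dnp_etaself j
  have h3 := dnp_etaself k
  have h4 := dnp_etaoff i j hij
  have h5 := dnp_etaoff j i (Ne.symm hij)
  have h6 := dnp_etaoff i k hik
  have h7 := dnp_etaoff k i (Ne.symm hik)
  have h8 := dnp_etaoff j k hjk
  have h9 := dnp_etaoff k j (Ne.symm hjk)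
  constructor
  · rw [eta_expand, h1, h2, h3, h4, h5, h6, h7, h8, h9]; ring
  · rw [Matrix.det_fin_three]
    simp only [Matrix.cons_val', Matrix.cons_val_zero, Matrix.cons_val_one, Matrix.head_cons,
      Matrix.head_fin_const, Matrix.cons_val_two, Matrix.tail_cons, Matrix.empty_val',
      Matrix.cons_val_fin_one, Matrix.of_apply]
    rw [h1, h2, h3, h4, h5, h6, h7, h8, h9]
    ring
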